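/- Let n, k ∈ ℕ with k ≥ 1, and let y = (y_γ)_{γ∈ℕ^n_{2k}} be a real sequence with y₀ = 1 such that for every δ ∈ ℕ^n_{2(k−1)}: y_δ − Σ_{i=1}^n y_{δ + 2eᵢ} = 0 (where eᵢ is the i-th unit multi-index); equivalently, the localizing matrix M_{k−1}((1 − ‖x‖₂²)·y) is the zero matrix. Then Σ_{α∈ℕ^n_k} ( k! / ((k − |α|)! · α₁!⋯αₙ!) ) · y_{2α} = 2^k. -/

import Mathlib

open Matrix BigOperators

/-- The set `ℕ^n_k` of multi-indices `α ∈ ℕ^n` with `|α| = α₁ + ⋯ + αₙ ≤ k`. -/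
abbrev MIdx (n k : ℕ) : Type := {α : Fin n → ℕ // ∑ i, α i ≤ k}

noncomputable instance (n k : ℕ) : Fintype (MIdx n k) :=
  Fintype.ofInjective
    (fun a : MIdx n k => fun i : Fin n =>
      (⟨a.1 i, Nat.lt_succ_of_le
        ((Finset.single_le_sum (fun j _ => Nat.zero_le (a.1 j)) (Finset.mem_univ i)).trans
          a.2)⟩ : Fin (k + 1)))
    (fun a b h => Subtype.ext (funext fun i => congrArg Fin.val (congrFun h i)))

open MvPolynomial

noncomputable def Lf (n : ℕ) (y : (Fin n → ℕ) → ℝ) : MvPolynomial (Fin n) ℝ →ₗ[ℝ] ℝ :=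
  Finsupp.linearCombination ℝ (fun d : Fin n →₀ ℕ => y (fun i => 2 * d i)) ∘ₗ
    (AddMonoidAlgebra.coeffLinearEquiv ℝ).toLinearMap

theorem Lf_monomial (n : ℕ) (y : (Fin n → ℕ) → ℝ) (d : Fin n →₀ ℕ) (c : ℝ) :
    Lf n y (monomial d c) = c * y (fun i => 2 * d i) := by
  have : AddMonoidAlgebra.coeff (monomial d c : MvPolynomial (Fin n) ℝ) = Finsupp.single d c := rfl
  rw [Lf, LinearMap.comp_apply, LinearEquiv.coe_coe, AddMonoidAlgebra.coeffLinearEquiv_apply, this]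
  erw [Finsupp.linearCombination_single]
  rw [smul_eq_mul]

theorem Lf_one (n : ℕ) (y : (Fin n → ℕ) → ℝ) : Lf n y 1 = y 0 := by
  have h1 : (1 : MvPolynomial (Fin n) ℝ) = monomial 0 1 := rfl
  rw [h1, Lf_monomial, one_mul]
  congr 1

theorem Lf_mul_S (n k : ℕ) (hk : 1 ≤ k) (y : (Fin n → ℕ) → ℝ)
    (hloc : ∀ δ : Fin n → ℕ, ∑ i, δ i ≤ 2 * (k - 1) →
      y δ - ∑ i : Fin n, y (fun j => δ j + if j = i then 2 else 0) = 0)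
    (q : MvPolynomial (Fin n) ℝ) (hq : q.totalDegree ≤ k - 1) :
    Lf n y (q * ∑ i : Fin n, X i) = Lf n y q := by
  conv_lhs => rw [q.as_sum]
  rw [Finset.sum_mul, map_sum]
  conv_rhs => rw [q.as_sum]
  rw [map_sum]
  refine Finset.sum_congr rfl (fun d hd => ?_)
  rw [Finset.mul_sum, map_sum]
  have hX : ∀ i : Fin n,
      monomial d (coeff d q) * X i = monomial (d + Finsupp.single i 1) (coeff d q) := by
    intro i
    have : (X i : MvPolynomial (Fin n) ℝ) = monomial (Finsupp.single i 1) 1 := rfl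
    rw [this, monomial_mul, mul_one]
  simp only [hX, Lf_monomial]
  rw [← Finset.mul_sum]
  have hdeg : ∑ i, (fun j => 2 * d j) i ≤ 2 * (k - 1) := by
    have h1 : d.sum (fun _ e => e) ≤ q.totalDegree := le_totalDegree hd
    have h2 : d.sum (fun _ e => e) = ∑ i, d i := Finsupp.sum_fintype _ _ (fun _ => rfl)
    calc ∑ i, 2 * d i = 2 * ∑ i, d i := by rw [Finset.mul_sum]
    _ ≤ 2 * (k - 1) := by
        apply Nat.mul_le_mul_left
        rw [← h2]; exact h1.trans hq
  have hl := hloc (fun j => 2 * d j) hdeg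
  rw [sub_eq_zero] at hl
  congr 1
  rw [hl]
  refine Finset.sum_congr rfl (fun i _ => ?_)
  congr 1
  funext j
  rw [Finsupp.add_apply, Finsupp.single_apply, Nat.mul_add]
  congr 1
  by_cases h : j = i
  · subst h; simp
  · rw [if_neg h, if_neg (fun h' => h h'.symm)]
    rfl


theorem Lf_pow (n k : ℕ) (hk : 1 ≤ k) (y : (Fin n → ℕ) → ℝ) (hy0 : y 0 = 1)
    (hloc : ∀ δ : Fin n → ℕ, ∑ i, δ i ≤ 2 * (k - 1) →
      y δ - ∑ i : Fin n, y (fun j => δ j + if j = i then 2 else 0) = 0)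
    (m : ℕ) (hm : m ≤ k) :
    Lf n y ((1 + ∑ i : Fin n, X i) ^ m) = 2 ^ m := by
  induction m with
  | zero => simpa [Lf_one] using hy0
  | succ m ih =>
    set S : MvPolynomial (Fin n) ℝ := ∑ i : Fin n, X i with hS
    have hdS : S.totalDegree ≤ 1 := by
      refine (totalDegree_finset_sum _ _).trans (Finset.sup_le (fun i _ => ?_))
      rw [totalDegree_X]
    have hd1S : (1 + S).totalDegree ≤ 1 := by
      refine (totalDegree_add _ _).trans ?_
      rw [totalDegree_one]
      simpa using hdS
    have hdpow : ((1 + S) ^ m).totalDegree ≤ k - 1 := by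
      refine (totalDegree_pow _ _).trans ?_
      calc m * (1 + S).totalDegree ≤ m * 1 := Nat.mul_le_mul_left _ hd1S
      _ = m := Nat.mul_one m
      _ ≤ k - 1 := Nat.le_sub_one_of_lt hm
    have hsplit : (1 + S) ^ (m + 1) = (1 + S) ^ m + (1 + S) ^ m * S := by ring
    rw [hsplit, map_add, Lf_mul_S n k hk y hloc _ hdpow, ih (Nat.le_of_succ_le hm)]
    ring

/-- If `y₀ = 1` and `y_δ − Σᵢ y_{δ+2eᵢ} = 0` for every
`δ ∈ ℕ^n_{2(k−1)}` (i.e. the localizing matrix of `1 − ‖x‖₂²` vanishes), then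
`Σ_{α∈ℕ^n_k} (k!/((k−|α|)!·α₁!⋯αₙ!)) · y_{2α} = 2^k`. -/
theorem stmt19 (n k : ℕ) (hk : 1 ≤ k) (y : (Fin n → ℕ) → ℝ) (hy0 : y 0 = 1)
    (hloc : ∀ δ : Fin n → ℕ, ∑ i, δ i ≤ 2 * (k - 1) →
      y δ - ∑ i : Fin n, y (fun j => δ j + if j = i then 2 else 0) = 0) :
    ∑ α : MIdx n k,
        ((k.factorial : ℝ)
            / (((k - ∑ i, α.1 i).factorial : ℝ) * ∏ i, ((α.1 i).factorial : ℝ)))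
          * y (fun i => 2 * α.1 i)
      = 2 ^ k := by
  classical
  set fo : Option (Fin n) → MvPolynomial (Fin n) ℝ := fun o => o.elim 1 X with hfo
  have hsum : (1 + ∑ i : Fin n, X i : MvPolynomial (Fin n) ℝ) = ∑ o : Option (Fin n), fo o := by
    rw [Fintype.sum_option]
    rfl
  have hexp : Lf n y ((1 + ∑ i : Fin n, X i) ^ k)
      = ∑ g ∈ Finset.piAntidiag (Finset.univ : Finset (Option (Fin n))) k,
          (Nat.multinomial Finset.univ g : ℝ) * y (fun i => 2 * g (some i)) := by
    rw [hsum, Finset.sum_pow_eq_sum_piAntidiag, map_sum]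
    refine Finset.sum_congr rfl (fun g hg => ?_)
    have hprod : ∏ o : Option (Fin n), fo o ^ g o
        = monomial (Finsupp.equivFunOnFinite.symm (fun i => g (some i))) (1 : ℝ) := by
      set D : Fin n →₀ ℕ := Finsupp.equivFunOnFinite.symm (fun i => g (some i)) with hD
      have hDa : ∀ x, D x = g (some x) := fun x => rfl
      have h1 : ∏ o : Option (Fin n), fo o ^ g o = ∏ i : Fin n, X i ^ D i := by
        rw [Fintype.prod_option]
        have h2 : (fo none : MvPolynomial (Fin n) ℝ) = 1 := rfl
        rw [h2, one_pow, one_mul]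
        exact Finset.prod_congr rfl (fun x _ => rfl)
      rw [h1, ← prod_X_pow_eq_monomial]
      exact (Finset.prod_subset (Finset.subset_univ _) (fun x _ hx => by
        rw [Finsupp.notMem_support_iff.mp hx, pow_zero])).symm
    rw [hprod, ← C_eq_coe_nat, C_mul_monomial, mul_one, Lf_monomial]
    rfl
  have hgoal : ∑ α : MIdx n k,
        ((k.factorial : ℝ)
            / (((k - ∑ i, α.1 i).factorial : ℝ) * ∏ i, ((α.1 i).factorial : ℝ)))
          * y (fun i => 2 * α.1 i)
      = ∑ g ∈ Finset.piAntidiag (Finset.univ : Finset (Option (Fin n))) k,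
          (Nat.multinomial Finset.univ g : ℝ) * y (fun i => 2 * g (some i)) := by
    have hmem : ∀ g ∈ Finset.piAntidiag (Finset.univ : Finset (Option (Fin n))) k,
        ∑ i, g (some i) ≤ k := by
      intro g hg
      rw [Finset.mem_piAntidiag] at hg
      have h1 := hg.1
      rw [Fintype.sum_option] at h1
      omega
    refine Finset.sum_bij'
      (fun (α : MIdx n k) _ => fun o : Option (Fin n) => o.elim (k - ∑ i, α.1 i) α.1)
      (fun g hg => (⟨fun i => g (some i), hmem g hg⟩ : MIdx n k)) ?_ ?_ ?_ ?_ ?_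
    · intro α _
      rw [Finset.mem_piAntidiag]
      refine ⟨?_, fun o _ => Finset.mem_univ o⟩
      rw [Fintype.sum_option]
      exact Nat.sub_add_cancel α.2
    · intro g hg
      exact Finset.mem_univ _
    · intro α _
      exact Subtype.ext rfl
    · intro g hg
      rw [Finset.mem_piAntidiag] at hg
      have h1 := hg.1
      rw [Fintype.sum_option] at h1
      funext o
      cases o with
      | none =>
        simp only [Option.elim_none]
        omega
      | some i => rfl
    · intro α _
      have spec := Nat.multinomial_spec (Finset.univ : Finset (Option (Fin n)))
        (fun o : Option (Fin n) => o.elim (k - ∑ i, α.1 i) α.1)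
      rw [Fintype.prod_option, Fintype.sum_option] at spec
      simp only [Option.elim_none, Option.elim_some] at spec
      rw [Nat.sub_add_cancel α.2] at spec
      have specR := congrArg (Nat.cast : ℕ → ℝ) spec
      push_cast at specR
      have hne : (((k - ∑ i, α.1 i).factorial : ℝ) * ∏ i, ((α.1 i).factorial : ℝ)) ≠ 0 := by
        positivity
      have hco : ((k.factorial : ℝ)
            / (((k - ∑ i, α.1 i).factorial : ℝ) * ∏ i, ((α.1 i).factorial : ℝ)))
          = (Nat.multinomial (Finset.univ : Finset (Option (Fin n)))
              (fun o : Option (Fin n) => o.elim (k - ∑ i, α.1 i) α.1) : ℝ) := by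
        rw [div_eq_iff hne, ← specR]
        ring
      rw [hco]
      rfl
  rw [hgoal, ← hexp, Lf_pow n k hk y hy0 hloc k le_rfl]
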